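/- Let R be a Dedekind domain with torsion class group, O ⊆ R an order with conductor f such that R/f is finite, every class of Cl(R) contains a prime ideal coprime to f, and suppose O is transfer Krull via an overmonoid H as in Proposition 2.2. Then every absolutely irreducible element a ∈ Reg_f(R) is R-associated to an element of O. -/

import Mathlib

open scoped nonZeroDivisors

section MonoidDefs
variable {H B : Type*} [CommMonoid H] [CommMonoid B]

/-- The set of lengths of `a`: `{0}` for units, otherwise the set of `k` such that
`a` is a product of `k` atoms (irreducible elements). -/
def lengthsSet (a : H) : Set ℕ :=
  {k | (IsUnit a ∧ k = 0) ∨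
    (¬ IsUnit a ∧ ∃ l : Multiset H, Multiset.card l = k ∧ (∀ x ∈ l, Irreducible x) ∧ l.prod = a)}

/-- A transfer homomorphism: (T1) `B = θ(H)·B^×` and `θ⁻¹(B^×) = H^×`;
(T2) factorizations of `θ u` lift to factorizations of `u` up to associates. -/
def IsTransferHom (θ : H →* B) : Prop :=
  (∀ b : B, ∃ u : H, ∃ ε : Bˣ, b = θ u * ε) ∧
  (∀ u : H, IsUnit (θ u) → IsUnit u) ∧
  (∀ u : H, ∀ b c : B, θ u = b * c →
    ∃ v w : H, u = v * w ∧ Associated (θ v) b ∧ Associated (θ w) c)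

/-- A Krull monoid: a monoid admitting a divisor homomorphism into a
free abelian monoid. -/
def IsKrullMonoid (H : Type*) [CommMonoid H] : Prop :=
  ∃ (ι : Type) (d : H →* Multiplicative (ι →₀ ℕ)), ∀ a b : H, d a ∣ d b → a ∣ b

/-- Half-factorial: all factorizations of an element into atoms have the same length. -/
def IsHalfFactorial (A : Type*) [CommMonoid A] : Prop :=
  ∀ (a : A) (l m : Multiset A), (∀ x ∈ l, Irreducible x) → (∀ x ∈ m, Irreducible x) →
    l.prod = a → m.prod = a → Multiset.card l = Multiset.card m

/-- An absolutely irreducible element: an atom all of whose powers factor uniquely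
into atoms, up to associates. -/
def AbsolutelyIrreducible (a : H) : Prop :=
  Irreducible a ∧ ∀ n : ℕ, 0 < n → ∀ l m : Multiset H,
    (∀ x ∈ l, Irreducible x) → (∀ x ∈ m, Irreducible x) →
    l.prod = a ^ n → m.prod = a ^ n → Multiset.Rel Associated l m

end MonoidDefs

section RingDefs
variable {R : Type*} [CommRing R]

/-- The conductor of a subring `O ⊆ R`: the largest ideal of `R` contained in `O`. -/
def Subring.conductor (O : Subring R) : Ideal R where
  carrier := {x | ∀ r : R, x * r ∈ O}
  add_mem' := by
    intro a b ha hb r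
    have h : (a + b) * r = a * r + b * r := by ring
    rw [h]; exact O.add_mem (ha r) (hb r)
  zero_mem' := by intro r; simpa using O.zero_mem
  smul_mem' := by
    intro c x hx r
    have h : c • x * r = x * (c * r) := by simp [smul_eq_mul]; ring
    rw [h]; exact hx (c * r)

/-- `a` is a regular element modulo the ideal `f`. -/
def RegF (f : Ideal R) (a : R) : Prop := IsUnit (Ideal.Quotient.mk f a)

end RingDefs

section TK
variable {K : Type*} [CommRing K]

/-- `x` and `y` are associated within the submonoid `H` of `K`. -/
def AssocIn (H : Submonoid K) (x y : K) : Prop :=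
  ∃ ε ∈ H, (∃ ε' ∈ H, ε * ε' = 1) ∧ x = y * ε

end TK

variable {R₀ : Type*}

/-- `H` is a Krull overmonoid of `O^∙` inside the quotient field of `O` (which is the
quotient field of `R`), with `O^∙ ⊆ H ⊆ q(O^∙)`, such that the inclusion `O^∙ ↪ H`
is a transfer homomorphism; this witnesses that `O` is transfer Krull. -/
structure IsTKOvermonoid {R : Type*} [CommRing R] [IsDomain R] [IsDedekindDomain R]
    (O : Subring R) (H : Submonoid (FractionRing R)) : Prop where
  nonzero : ∀ x ∈ H, x ≠ 0
  incl : ∀ a : R, a ∈ O → a ≠ 0 → algebraMap R (FractionRing R) a ∈ H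
  inQuot : ∀ x ∈ H, ∃ a b : R, a ∈ O ∧ b ∈ O ∧ a ≠ 0 ∧ b ≠ 0 ∧
    x * algebraMap R (FractionRing R) b = algebraMap R (FractionRing R) a
  krull : IsKrullMonoid ↥H
  t1 : ∀ x ∈ H, ∃ a : R, a ∈ O ∧ a ≠ 0 ∧ ∃ ε ∈ H, (∃ ε' ∈ H, ε * ε' = 1) ∧
    x = algebraMap R (FractionRing R) a * ε
  t1' : ∀ a : R, a ∈ O → a ≠ 0 →
    (∃ y ∈ H, algebraMap R (FractionRing R) a * y = 1) → ∃ b ∈ O, a * b = 1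
  t2 : ∀ a : R, a ∈ O → a ≠ 0 → ∀ x ∈ H, ∀ y ∈ H,
    algebraMap R (FractionRing R) a = x * y →
    ∃ v w : R, v ∈ O ∧ w ∈ O ∧ a = v * w ∧
      AssocIn H (algebraMap R (FractionRing R) v) x ∧
      AssocIn H (algebraMap R (FractionRing R) w) y

section AuxLemmas

/-- From a relation `Multiset.Rel r l m`, every member of `m` is related to some member of `l`. -/
theorem multiset_rel_exists_left {α : Type*} {r : α → α → Prop} {l m : Multiset α}
    (h : Multiset.Rel r l m) : ∀ x ∈ m, ∃ y ∈ l, r y x := by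
  induction h with
  | zero => intro x hx; exact absurd hx (Multiset.notMem_zero x)
  | @cons a b as bs hab _ ih =>
    intro x hx
    rcases Multiset.mem_cons.1 hx with rfl | hx
    · exact ⟨a, Multiset.mem_cons_self _ _, hab⟩
    · obtain ⟨y, hy, hr⟩ := ih x hx
      exact ⟨y, Multiset.mem_cons_of_mem hy, hr⟩

theorem assoc_pow_of_forall_assoc {R : Type*} [CommMonoid R] {a : R} :
    ∀ l : Multiset R, (∀ x ∈ l, Associated a x) →
      Associated (a ^ Multiset.card l) l.prod := by
  intro l
  induction l using Multiset.induction_on with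
  | empty => intro _; simp
  | cons b s ih =>
    intro h
    have h1 : Associated a b := h b (Multiset.mem_cons_self _ _)
    have h2 := ih fun x hx => h x (Multiset.mem_cons_of_mem hx)
    rw [Multiset.card_cons, Multiset.prod_cons, pow_succ, mul_comm]
    exact h1.mul_mul h2

theorem nat_le_of_forall_mul_le {A B : ℕ} (h : ∀ j : ℕ, j * A ≤ (j + 1) * B) : A ≤ B := by
  by_contra hc
  push_neg at hc
  have := h (B + 1)
  nlinarith

end AuxLemmas

theorem mult_finsupp_eq_one_of_mul_eq_one {ι : Type} {x y : Multiplicative (ι →₀ ℕ)}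
    (h : x * y = 1) : x = 1 := by
  have h' : Multiplicative.toAdd x + Multiplicative.toAdd y = 0 := by
    exact_mod_cast congrArg Multiplicative.toAdd h
  exact Multiplicative.toAdd.injective (add_eq_zero.1 h').1

section Factorization
variable {R : Type*} [CommRing R] [IsDomain R] [WfDvdMonoid R]

theorem irred_factor_assoc {a : R} (habs : AbsolutelyIrreducible a) {n : ℕ} (hn : 0 < n)
    {q : R} (hq : Irreducible q) (hdvd : q ∣ a ^ n) : Associated a q := by
  have ha0 : a ≠ 0 := habs.1.ne_zero
  obtain ⟨w, hw⟩ := hdvd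
  have hw0 : w ≠ 0 := by
    intro h; rw [h, mul_zero] at hw; exact pow_ne_zero n ha0 hw
  obtain ⟨lw, hlw_irr, u, hu⟩ := WfDvdMonoid.exists_factors w hw0
  have hqu : Irreducible (q * (u : R)) :=
    (associated_mul_unit_right q (u : R) u.isUnit).irreducible hq
  set m : Multiset R := (q * (u : R)) ::ₘ lw with hm
  have hm_irr : ∀ x ∈ m, Irreducible x := by
    intro x hx
    rcases Multiset.mem_cons.1 hx with rfl | hx
    · exact hqu
    · exact hlw_irr x hx
  have hm_prod : m.prod = a ^ n := by
    rw [hm, Multiset.prod_cons]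
    calc q * (u : R) * lw.prod = q * (lw.prod * (u : R)) := by ring
    _ = q * w := by rw [hu]
    _ = a ^ n := hw.symm
  have hl_irr : ∀ x ∈ Multiset.replicate n a, Irreducible x := by
    intro x hx
    rw [Multiset.eq_of_mem_replicate hx]
    exact habs.1
  have hl_prod : (Multiset.replicate n a).prod = a ^ n := Multiset.prod_replicate n a
  have hrel := habs.2 n hn (Multiset.replicate n a) m hl_irr hm_irr hl_prod hm_prod
  obtain ⟨y, hy, hass⟩ := multiset_rel_exists_left hrel (q * (u : R))
    (Multiset.mem_cons_self _ _)
  rw [Multiset.eq_of_mem_replicate hy] at hass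
  exact hass.trans (associated_mul_unit_right q (u : R) u.isUnit).symm

theorem divisor_eq_unit_mul_pow {a : R} (habs : AbsolutelyIrreducible a) {n : ℕ} (hn : 0 < n)
    {v : R} (hv0 : v ≠ 0) (hdvd : v ∣ a ^ n) : ∃ (ε : Rˣ) (k : ℕ), v = (ε : R) * a ^ k := by
  obtain ⟨lv, hirr, u, hu⟩ := WfDvdMonoid.exists_factors v hv0
  have hassoc : ∀ x ∈ lv, Associated a x := by
    intro x hx
    exact irred_factor_assoc habs hn (hirr x hx)
      ((Multiset.dvd_prod hx).trans ((Dvd.intro _ hu).trans hdvd))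
  obtain ⟨u', hu'⟩ := assoc_pow_of_forall_assoc lv hassoc
  refine ⟨u' * u, Multiset.card lv, ?_⟩
  calc v = lv.prod * (u : R) := hu.symm
  _ = a ^ Multiset.card lv * (u' : R) * (u : R) := by rw [hu']
  _ = ((u' * u : Rˣ) : R) * a ^ Multiset.card lv := by push_cast; ring

end Factorization

section RingAux

/-- The conductor of a module-finite order is nonzero. -/
theorem conductor_elem_ne_zero {R : Type*} [CommRing R] [IsDomain R]
    (O : Subring R) (hfg : Module.Finite ↥O R)
    (hfrac : ∀ r : R, ∃ a b : ↥O, (b : R) ≠ 0 ∧ (b : R) * r = (a : R)) :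
    ∃ c : R, c ≠ 0 ∧ ∀ r : R, c * r ∈ O := by
  obtain ⟨s, hs⟩ : (⊤ : Submodule ↥O R).FG := hfg.fg_top
  choose A B hB0 hBr using hfrac
  classical
  refine ⟨∏ x ∈ s, (B x : R), ?_, ?_⟩
  · rw [Finset.prod_ne_zero_iff]
    exact fun x _ => hB0 x
  · intro r
    have hr : r ∈ Submodule.span ↥O (↑s : Set R) := hs ▸ Submodule.mem_top
    refine Submodule.span_induction (p := fun r _ => (∏ x ∈ s, (B x : R)) * r ∈ O)
      ?_ ?_ ?_ ?_ hr
    · intro x hx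
      rw [← Finset.mul_prod_erase s _ hx, mul_comm (B x : R), mul_assoc, hBr x]
      exact O.mul_mem (prod_mem fun y _ => SetLike.coe_mem (B y)) (SetLike.coe_mem (A x))
    · simpa using O.zero_mem
    · intro x y _ _ hx hy
      rw [mul_add]; exact O.add_mem hx hy
    · intro o x _ hx
      have : (∏ x ∈ s, (B x : R)) * (o • x) = (o : R) * ((∏ x ∈ s, (B x : R)) * x) := by
        rw [Subring.smul_def, smul_eq_mul]; ring
      rw [this]
      exact O.mul_mem (SetLike.coe_mem o) hx

/-- Some positive power of a regular element lies in the order. -/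
theorem pow_mem_order {R : Type*} [CommRing R]
    (O : Subring R) [hfin : Finite (R ⧸ O.conductor)]
    {a : R} (hreg : RegF O.conductor a) :
    ∃ n : ℕ, 0 < n ∧ a ^ n ∈ O := by
  obtain ⟨n, hn, hpow⟩ := isOfFinOrder_iff_pow_eq_one.1 (isOfFinOrder_of_finite hreg.unit)
  refine ⟨n, hn, ?_⟩
  have h1 : Ideal.Quotient.mk O.conductor (a ^ n) = Ideal.Quotient.mk O.conductor 1 := by
    have := congrArg (Units.val) hpow
    have hs : ((hreg.unit : (R ⧸ O.conductor)ˣ) : R ⧸ O.conductor) = Ideal.Quotient.mk O.conductor a :=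
      IsUnit.unit_spec hreg
    rw [Units.val_pow_eq_pow_val, hs, Units.val_one, ← map_pow] at this
    rw [this, map_one]
  have h2 : a ^ n - 1 ∈ O.conductor := by
    rwa [Ideal.Quotient.eq] at h1
  have h3 : a ^ n - 1 ∈ O := by simpa using h2 1
  have := O.add_mem h3 O.one_mem
  simpa using this

end RingAux

section MemH

/-- Since a Krull monoid is completely integrally closed and the conductor is nonzero,
every nonzero element of `R` lies in `H`. -/
theorem mem_H_of_ne_zero {R : Type*} [CommRing R] [IsDomain R] [IsDedekindDomain R]
    {O : Subring R} {H : Submonoid (FractionRing R)} (hH : IsTKOvermonoid O H)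
    {c : R} (hc0 : c ≠ 0) (hc : ∀ r : R, c * r ∈ O) :
    ∀ x : R, x ≠ 0 → algebraMap R (FractionRing R) x ∈ H := by
  obtain ⟨ι, d, hd⟩ := hH.krull
  intro x hx0
  set θ := algebraMap R (FractionRing R) with hθ
  have hθinj : Function.Injective θ := IsFractionRing.injective R (FractionRing R)
  have hcO : c ∈ O := by simpa using hc 1
  have hmem : ∀ j : ℕ, θ (c * x ^ j) ∈ H := fun j =>
    hH.incl _ (hc (x ^ j)) (mul_ne_zero hc0 (pow_ne_zero _ hx0))
  set e : ℕ → ↥H := fun j => ⟨θ (c * x ^ j), hmem j⟩ with he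
  have e0 : ↥H := ⟨θ c, hH.incl c hcO hc0⟩
  have key : ∀ j : ℕ, e (j + 1) * (⟨θ c, hH.incl c hcO hc0⟩ : ↥H) ^ j = (e 1) ^ (j + 1) := by
    intro j
    apply Subtype.ext
    push_cast [he]
    simp only [← map_pow, ← map_mul]
    refine congrArg _ ?_
    ring
  have hdkey : ∀ j : ℕ, d (e (j + 1)) * (d ⟨θ c, hH.incl c hcO hc0⟩) ^ j
      = (d (e 1)) ^ (j + 1) := by
    intro j
    rw [← map_pow, ← map_pow, ← map_mul, key j]
  set A : ι →₀ ℕ := Multiplicative.toAdd (d ⟨θ c, hH.incl c hcO hc0⟩) with hA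
  set B : ι →₀ ℕ := Multiplicative.toAdd (d (e 1)) with hB
  have hle : A ≤ B := by
    rw [Finsupp.le_def]
    intro i
    apply nat_le_of_forall_mul_le
    intro j
    have h1 := congrArg (fun z => (Multiplicative.toAdd z) i) (hdkey j)
    simp only [toAdd_mul, toAdd_pow, Finsupp.add_apply, Finsupp.smul_apply,
      smul_eq_mul] at h1
    rw [← hA, ← hB] at h1
    omega
  have hdvd : d ⟨θ c, hH.incl c hcO hc0⟩ ∣ d (e 1) := by
    refine ⟨Multiplicative.ofAdd (B - A), ?_⟩
    apply Multiplicative.toAdd.injective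
    rw [toAdd_mul]
    simp only [toAdd_ofAdd, ← hA]
    rw [add_tsub_cancel_of_le hle]
  obtain ⟨z, hz⟩ := hd _ _ hdvd
  have hz' : θ (c * x ^ 1) = θ c * (z : FractionRing R) := congrArg Subtype.val hz
  rw [map_mul, map_pow, pow_one] at hz'
  have hcne : θ c ≠ 0 := by
    simp only [hθ, ne_eq, map_eq_zero_iff θ hθinj]
    exact fun h => hc0 (hθinj (h.trans (map_zero θ).symm))
  have : θ x = (z : FractionRing R) := mul_left_cancel₀ hcne hz'
  rw [this]
  exact z.2

end MemH

theorem abs_irreducible_associated_to_order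
    {R : Type*} [CommRing R] [IsDomain R] [IsDedekindDomain R]
    (O : Subring R) (hne : O ≠ ⊤) (hfg : Module.Finite ↥O R)
    (hfrac : ∀ r : R, ∃ a b : ↥O, (b : R) ≠ 0 ∧ (b : R) * r = (a : R))
    (htor : ∀ c : ClassGroup R, ∃ n : ℕ, 0 < n ∧ c ^ n = 1)
    (hfin : Finite (R ⧸ O.conductor))
    (hcls : ∀ c : ClassGroup R, ∃ (P : Ideal R) (hP : P ∈ (Ideal R)⁰),
      P.IsPrime ∧ ¬ O.conductor ≤ P ∧ ClassGroup.mk0 ⟨P, hP⟩ = c)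
    (H : Submonoid (FractionRing R)) (hH : IsTKOvermonoid O H)
    (a : R) (hreg : RegF O.conductor a) (habs : AbsolutelyIrreducible a) :
    ∃ b ∈ O, Associated a b := by
  classical
  obtain ⟨c, hc0, hc⟩ := conductor_elem_ne_zero O hfg hfrac
  have ha0 : a ≠ 0 := habs.1.ne_zero
  haveI : Finite (R ⧸ O.conductor) := hfin
  obtain ⟨n, hn, hanO⟩ := pow_mem_order O hreg
  obtain ⟨m, rfl⟩ : ∃ m, n = m + 1 := ⟨n - 1, by omega⟩
  set θ := algebraMap R (FractionRing R) with hθ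
  have hmemH : ∀ x : R, x ≠ 0 → θ x ∈ H := mem_H_of_ne_zero hH hc0 hc
  have hu0 : a ^ (m + 1) ≠ 0 := pow_ne_zero _ ha0
  have hsplit : θ (a ^ (m + 1)) = θ a * θ (a ^ m) := by
    rw [← map_mul, ← pow_succ']
  obtain ⟨v, w, hvO, hwO, hvw, hva, -⟩ := hH.t2 (a ^ (m + 1)) hanO hu0 (θ a) (hmemH a ha0)
    (θ (a ^ m)) (hmemH _ (pow_ne_zero _ ha0)) hsplit
  have hv0 : v ≠ 0 := by
    intro h
    rw [h, zero_mul] at hvw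
    exact hu0 hvw
  obtain ⟨ε, k, hvk⟩ := divisor_eq_unit_mul_pow habs (Nat.succ_pos m) hv0 ⟨w, hvw⟩
  by_cases hk : k = 1
  · subst hk
    exact ⟨v, hvO, ⟨ε, by rw [hvk, pow_one, mul_comm]⟩⟩
  · exfalso
    obtain ⟨ι, d, hd⟩ := hH.krull
    set eA : ↥H := ⟨θ a, hmemH a ha0⟩ with heA
    set eV : ↥H := ⟨θ v, hmemH v hv0⟩ with heV
    obtain ⟨εH, hεH, ⟨εH', hεH', hεε'⟩, hveq⟩ := hva
    have h1 : eV = eA * ⟨εH, hεH⟩ := Subtype.ext hveq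
    have hEunit : d (⟨εH, hεH⟩ : ↥H) = 1 := by
      have he : (⟨εH, hεH⟩ : ↥H) * ⟨εH', hεH'⟩ = 1 := Subtype.ext hεε'
      have hde := congrArg d he
      rw [map_mul, map_one] at hde
      exact mult_finsupp_eq_one_of_mul_eq_one hde
    have hUnitR : d (⟨θ (ε : R), hmemH _ ε.ne_zero⟩ : ↥H) = 1 := by
      have he : (⟨θ (ε : R), hmemH _ ε.ne_zero⟩ : ↥H) *
          ⟨θ ((ε⁻¹ : Rˣ) : R), hmemH _ (ε⁻¹).ne_zero⟩ = 1 := by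
        apply Subtype.ext
        push_cast
        rw [← map_mul]
        simp
      have hde := congrArg d he
      rw [map_mul, map_one] at hde
      exact mult_finsupp_eq_one_of_mul_eq_one hde
    have h2 : eV = ⟨θ (ε : R), hmemH _ ε.ne_zero⟩ * eA ^ k := by
      apply Subtype.ext
      push_cast [heV, heA]
      rw [← map_pow, ← map_mul, hvk]
    have hdeq : d eA = (d eA) ^ k := by
      have e1 := congrArg d h1
      rw [map_mul, hEunit, mul_one] at e1
      have e2 := congrArg d h2
      rw [map_mul, map_pow, hUnitR, one_mul] at e2
      exact e1.symm.trans e2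
    have hdA : d eA = 1 := by
      apply Multiplicative.toAdd.injective
      set X := Multiplicative.toAdd (d eA) with hX
      have hXeq : X = k • X := by
        rw [hX]
        conv_lhs => rw [hdeq]
        simp [toAdd_pow]
      ext i
      have hXi : X i = k * X i := by
        have := congrArg (fun z => z i) hXeq
        simpa using this
      have : X i = 0 := by
        by_contra hne
        have hpos : 0 < X i := Nat.pos_of_ne_zero hne
        have : 1 * X i = k * X i := by omega
        exact hk (Nat.eq_of_mul_eq_mul_right hpos this).symm
      simpa using this
    have hupowmem : θ (a ^ (m + 1)) ∈ H := hmemH _ hu0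
    have hupow : d (⟨θ (a ^ (m + 1)), hupowmem⟩ : ↥H) = 1 := by
      have he : (⟨θ (a ^ (m + 1)), hupowmem⟩ : ↥H) = eA ^ (m + 1) := by
        apply Subtype.ext
        push_cast [heA]
        rw [← map_pow]
      rw [he, map_pow, hdA, one_pow]
    obtain ⟨y, hy⟩ := hd (⟨θ (a ^ (m + 1)), hupowmem⟩ : ↥H) 1 (by rw [hupow, map_one])
    have hy' : θ (a ^ (m + 1)) * (y : FractionRing R) = 1 := by
      have := congrArg Subtype.val hy
      simpa using this.symm
    obtain ⟨b, hbO, hb⟩ := hH.t1' (a ^ (m + 1)) hanO hu0 ⟨(y : FractionRing R), y.2, hy'⟩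
    exact habs.1.not_isUnit ((isUnit_pow_iff (Nat.succ_ne_zero m)).1 (IsUnit.of_mul_eq_one b hb))
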